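/- Let v > 0, let X be a real random variable distributed as the centered Gaussian measure with variance v, and let J be any real random variable independent of X. Then for every ε ≥ 0 and every δ > 0, |P(|X + J| ≤ ε) − 2ε/√(2πv)| ≤ (4ε/√(2πv))·P(|J| ≥ δ) + (ε/(√(2π) v^{3/2}))·E[(|J| + ε)²·1_{|J| < δ}]. (This is a fully quantitative constant-volatility version of Lemma 2: the small-ball probability of a jump diffusion increment equals the pure-Gaussian value 2ε·φ(0)/√v up to an explicit error coming from large jumps and from the second moment of small jumps.) -/

import Mathlib

open MeasureTheory ProbabilityTheory

lemma interval_eq (ε j : ℝ) : {x : ℝ | |x + j| ≤ ε} = Set.Icc (-ε - j) (ε - j) := by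
  ext x
  simp only [Set.mem_setOf_eq, Set.mem_Icc, abs_le]
  constructor <;> rintro ⟨h1, h2⟩ <;> constructor <;> linarith

lemma gauss_toReal (v : NNReal) (hv : v ≠ 0) (ε j : ℝ) :
    ((gaussianReal 0 v) {x | |x + j| ≤ ε}).toReal
      = ∫ x in Set.Icc (-ε - j) (ε - j), gaussianPDFReal 0 v x := by
  rw [interval_eq, gaussianReal_apply_eq_integral 0 hv, ENNReal.toReal_ofReal]
  exact setIntegral_nonneg measurableSet_Icc fun x _ => gaussianPDFReal_nonneg _ _ _

lemma const_int (a b C : ℝ) (hab : a ≤ b) :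
    ∫ _x in Set.Icc a b, C = (b - a) * C := by
  rw [setIntegral_const, measureReal_def, Real.volume_Icc, ENNReal.toReal_ofReal (by linarith), smul_eq_mul]

lemma gauss_pointwise1 (v : NNReal) (hv : 0 < v) (ε : ℝ) (hε : 0 ≤ ε) (j : ℝ) :
    |((gaussianReal 0 v) {x | |x + j| ≤ ε}).toReal
        - 2 * ε * (Real.sqrt (2 * Real.pi * v))⁻¹|
      ≤ 2 * ε * (Real.sqrt (2 * Real.pi * v))⁻¹ := by
  have hvne : v ≠ 0 := hv.ne'
  set c : ℝ := (Real.sqrt (2 * Real.pi * v))⁻¹ with hc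
  have hc0 : 0 ≤ c := inv_nonneg.2 (Real.sqrt_nonneg _)
  rw [gauss_toReal v hvne]
  set a := -ε - j
  set b := ε - j
  have hab : a ≤ b := by simp only [a, b]; linarith
  have hint : IntegrableOn (gaussianPDFReal 0 v) (Set.Icc a b) :=
    (integrable_gaussianPDFReal 0 v).integrableOn
  have hintc : IntegrableOn (fun _ : ℝ => c) (Set.Icc a b) :=
    integrableOn_const (by rw [Real.volume_Icc]; exact ENNReal.ofReal_lt_top.ne
      )
  have h0 : 0 ≤ ∫ x in Set.Icc a b, gaussianPDFReal 0 v x :=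
    setIntegral_nonneg measurableSet_Icc fun x _ => gaussianPDFReal_nonneg _ _ _
  have hle : (∫ x in Set.Icc a b, gaussianPDFReal 0 v x) ≤ 2 * ε * c := by
    have : (∫ x in Set.Icc a b, gaussianPDFReal 0 v x) ≤ ∫ _x in Set.Icc a b, c := by
      refine setIntegral_mono_on hint hintc measurableSet_Icc fun x _ => ?_
      rw [gaussianPDFReal]
      calc (Real.sqrt (2 * Real.pi * v))⁻¹ * Real.exp (-(x - 0)^2 / (2 * v))
          ≤ (Real.sqrt (2 * Real.pi * v))⁻¹ * 1 := by
            gcongr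
            exact Real.exp_le_one_iff.2 (by
                apply div_nonpos_of_nonpos_of_nonneg
                · simp [neg_nonpos, sq_nonneg]
                · positivity)
        _ = c := by rw [mul_one]
    rw [const_int a b c hab] at this
    have hba : b - a = 2 * ε := by simp only [a, b]; ring
    rw [hba] at this
    exact this
  rw [abs_le]
  constructor <;> linarith

lemma gauss_pointwise2 (v : NNReal) (hv : 0 < v) (ε : ℝ) (hε : 0 ≤ ε) (j : ℝ) :
    |((gaussianReal 0 v) {x | |x + j| ≤ ε}).toReal
        - 2 * ε * (Real.sqrt (2 * Real.pi * v))⁻¹|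
      ≤ (ε * (Real.sqrt (2 * Real.pi * v))⁻¹ / v) * (|j| + ε)^2 := by
  have hvne : v ≠ 0 := hv.ne'
  have hv' : (0:ℝ) < v := hv
  set c : ℝ := (Real.sqrt (2 * Real.pi * v))⁻¹ with hc
  have hc0 : 0 ≤ c := inv_nonneg.2 (Real.sqrt_nonneg _)
  rw [gauss_toReal v hvne]
  set a := -ε - j with ha
  set b := ε - j with hb
  have hab : a ≤ b := by simp only [a, b]; linarith
  have hba : b - a = 2 * ε := by simp only [a, b]; ring
  have hint : IntegrableOn (gaussianPDFReal 0 v) (Set.Icc a b) :=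
    (integrable_gaussianPDFReal 0 v).integrableOn
  have hintc : IntegrableOn (fun _ : ℝ => c) (Set.Icc a b) :=
    integrableOn_const (by rw [Real.volume_Icc]; exact ENNReal.ofReal_lt_top.ne)
  have h2εc : 2 * ε * c = ∫ _x in Set.Icc a b, c := by
    rw [const_int a b c hab, hba]
  rw [h2εc, ← integral_sub hint hintc]
  have habs : |∫ x in Set.Icc a b, (gaussianPDFReal 0 v x - c)|
      ≤ ∫ x in Set.Icc a b, |gaussianPDFReal 0 v x - c| := by
    have := norm_integral_le_integral_norm (μ := volume.restrict (Set.Icc a b))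
      (f := fun x => gaussianPDFReal 0 v x - c)
    simpa [Real.norm_eq_abs] using this
  refine habs.trans ?_
  have hbound : ∀ x ∈ Set.Icc a b,
      |gaussianPDFReal 0 v x - c| ≤ c * (|j| + ε)^2 / (2 * v) := by
    intro x hx
    have hxabs : |x| ≤ |j| + ε := by
      have h1 : a ≤ x := hx.1
      have h2 : x ≤ b := hx.2
      rw [abs_le]
      rcases abs_cases j with ⟨hj, _⟩ | ⟨hj, _⟩ <;>
        constructor <;> simp only [a, b] at h1 h2 <;> nlinarith [abs_nonneg j]
    have hx2 : x^2 ≤ (|j| + ε)^2 := by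
      rw [← sq_abs]
      exact pow_le_pow_left₀ (abs_nonneg x) hxabs 2
    rw [gaussianPDFReal]
    simp only [sub_zero]
    have hexp : Real.exp (-x^2 / (2 * v)) ≤ 1 :=
      Real.exp_le_one_iff.2 (by
        apply div_nonpos_of_nonpos_of_nonneg
        · simp [neg_nonpos, sq_nonneg]
        · positivity)
    have heq : (Real.sqrt (2 * Real.pi * v))⁻¹ * Real.exp (-x^2 / (2 * v)) - c
        = c * (Real.exp (-x^2 / (2 * v)) - 1) := by rw [hc]; ring
    rw [heq, abs_mul, abs_of_nonneg hc0, abs_sub_comm, abs_of_nonneg (by linarith)]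
    have hkey : 1 - Real.exp (-x^2 / (2 * v)) ≤ x^2 / (2 * v) := by
      have := Real.add_one_le_exp (-(x^2 / (2 * v)))
      have heq2 : -x^2 / (2*v) = -(x^2 / (2*v)) := by ring
      rw [heq2]
      linarith
    calc c * (1 - Real.exp (-x^2 / (2 * v))) ≤ c * (x^2 / (2 * v)) := by gcongr
      _ ≤ c * ((|j| + ε)^2 / (2 * v)) := by gcongr
      _ = c * (|j| + ε)^2 / (2 * v) := by ring
  have : (∫ x in Set.Icc a b, |gaussianPDFReal 0 v x - c|)
      ≤ ∫ _x in Set.Icc a b, c * (|j| + ε)^2 / (2 * v) := by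
    refine setIntegral_mono_on (hint.sub hintc).abs
      (integrableOn_const (by rw [Real.volume_Icc]; exact ENNReal.ofReal_lt_top.ne))
      measurableSet_Icc hbound
  refine this.trans ?_
  rw [const_int _ _ _ hab, hba]
  apply le_of_eq
  field_simp

theorem jump_diffusion_smallball_expansion (v : NNReal) (hv : 0 < v)
    {Ω : Type*} [MeasurableSpace Ω] (P : Measure Ω) [IsProbabilityMeasure P]
    (X J : Ω → ℝ) (hX : Measurable X) (hJ : Measurable J)
    (hXlaw : Measure.map X P = gaussianReal 0 v)
    (hindep : IndepFun X J P) (ε δ : ℝ) (hε : 0 ≤ ε) (hδ : 0 < δ) :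
    |(P {ω | |X ω + J ω| ≤ ε}).toReal - 2 * ε / Real.sqrt (2 * Real.pi * (v : ℝ))| ≤
      (4 * ε / Real.sqrt (2 * Real.pi * (v : ℝ))) * (P {ω | δ ≤ |J ω|}).toReal +
        (ε / (Real.sqrt (2 * Real.pi) * (v : ℝ) ^ ((3 : ℝ) / 2))) *
          ∫ ω, Set.indicator {ω | |J ω| < δ} (fun ω => (|J ω| + ε) ^ 2) ω ∂P := by
  have hvne : v ≠ 0 := hv.ne'
  have hv' : (0:ℝ) < v := hv
  set c : ℝ := (Real.sqrt (2 * Real.pi * v))⁻¹ with hc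
  have hc0 : 0 ≤ c := inv_nonneg.2 (Real.sqrt_nonneg _)
  -- the slice set
  set S : Set (ℝ × ℝ) := {p : ℝ × ℝ | |p.2 + p.1| ≤ ε} with hSdef
  have hS : MeasurableSet S :=
    measurableSet_le (measurable_snd.add measurable_fst).abs measurable_const
  have hGmeas : Measurable fun j : ℝ => (gaussianReal 0 v) {x | |x + j| ≤ ε} :=
    measurable_measure_prodMk_left (ν := gaussianReal 0 v) hS
  -- step 1: rewrite the probability via independence and Fubini
  have hmap : Measure.map (fun ω => (J ω, X ω)) P
      = (Measure.map J P).prod (gaussianReal 0 v) := by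
    rw [← hXlaw]
    exact (indepFun_iff_map_prod_eq_prod_map_map hJ.aemeasurable hX.aemeasurable).mp hindep.symm
  have hkey : P {ω | |X ω + J ω| ≤ ε}
      = ∫⁻ ω, (gaussianReal 0 v) {x | |x + J ω| ≤ ε} ∂P := by
    have h1 : {ω | |X ω + J ω| ≤ ε} = (fun ω => (J ω, X ω)) ⁻¹' S := rfl
    rw [h1, ← Measure.map_apply (hJ.prodMk hX) hS, hmap, Measure.prod_apply hS]
    exact lintegral_map hGmeas hJ
  -- step 2: toReal and pass to a Bochner integral
  set g : ℝ → ℝ := fun j => ((gaussianReal 0 v) {x | |x + j| ≤ ε}).toReal with hgdef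
  have hgmeas : Measurable g := hGmeas.ennreal_toReal
  have hg01 : ∀ j, 0 ≤ g j ∧ g j ≤ 1 := fun j =>
    ⟨ENNReal.toReal_nonneg, by
      simp only [g]
      exact ENNReal.toReal_le_of_le_ofReal zero_le_one (by simpa using prob_le_one)⟩
  have htoReal : (P {ω | |X ω + J ω| ≤ ε}).toReal = ∫ ω, g (J ω) ∂P := by
    rw [hkey]
    exact (integral_toReal ((hGmeas.comp hJ).aemeasurable)
      (ae_of_all _ fun ω => measure_lt_top _ _)).symm
  -- integrability facts
  have hintg : Integrable (fun ω => g (J ω)) P := by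
    refine ⟨(hgmeas.comp hJ).aestronglyMeasurable, ?_⟩
    refine HasFiniteIntegral.of_bounded (C := 1) (ae_of_all _ fun ω => ?_)
    rw [Real.norm_eq_abs, abs_of_nonneg (hg01 _).1]
    exact (hg01 _).2
  have hinth : Integrable (fun ω => g (J ω) - 2 * ε * c) P := hintg.sub (integrable_const _)
  -- step 3: difference as an integral and bound by the integral of abs
  have hconst : ∫ _ω, 2 * ε * c ∂P = 2 * ε * c := by simp
  have hdiff : (P {ω | |X ω + J ω| ≤ ε}).toReal - 2 * ε * c
      = ∫ ω, (g (J ω) - 2 * ε * c) ∂P := by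
    rw [htoReal, integral_sub hintg (integrable_const _), hconst]
  have habs : |(P {ω | |X ω + J ω| ≤ ε}).toReal - 2 * ε * c|
      ≤ ∫ ω, |g (J ω) - 2 * ε * c| ∂P := by
    rw [hdiff]
    have := norm_integral_le_integral_norm (μ := P) (f := fun ω => g (J ω) - 2 * ε * c)
    simpa [Real.norm_eq_abs] using this
  -- step 4: split into the two error terms
  set A : Set Ω := {ω | δ ≤ |J ω|} with hA
  have hAmeas : MeasurableSet A := measurableSet_le measurable_const hJ.abs
  have hAc : Aᶜ = {ω | |J ω| < δ} := by
    ext ω; simp [A, not_le]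
  have hptwise : ∀ ω, |g (J ω) - 2 * ε * c|
      ≤ Set.indicator A (fun _ => 4 * ε * c) ω
        + Set.indicator {ω | |J ω| < δ} (fun ω => (ε * c / v) * (|J ω| + ε)^2) ω := by
    intro ω
    by_cases hω : ω ∈ A
    · rw [Set.indicator_of_mem hω, Set.indicator_of_notMem (by
        rw [← hAc]; exact fun h => h hω)]
      have := gauss_pointwise1 v hv ε hε (J ω)
      have h4 : 2 * ε * c ≤ 4 * ε * c := by nlinarith
      simp only [g]
      linarith [this]
    · rw [Set.indicator_of_notMem hω, Set.indicator_of_mem (by rw [← hAc]; exact hω)]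
      simp only [zero_add]
      exact gauss_pointwise2 v hv ε hε (J ω)
  -- integrability of the two indicator bounds
  have hint1 : Integrable (Set.indicator A fun _ => 4 * ε * c) P :=
    (integrable_const _).indicator hAmeas
  have hBmeas : MeasurableSet {ω | |J ω| < δ} := measurableSet_lt hJ.abs measurable_const
  have hint2 : Integrable
      (Set.indicator {ω | |J ω| < δ} fun ω => (ε * c / v) * (|J ω| + ε)^2) P := by
    refine ⟨(((measurable_const.mul ((hJ.abs.add_const ε).pow measurable_const))).indicator
      hBmeas).aestronglyMeasurable, ?_⟩
    refine HasFiniteIntegral.of_bounded (C := (ε * c / v) * (|δ| + |ε|)^2)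
      (ae_of_all _ fun ω => ?_)
    rw [Real.norm_eq_abs]
    by_cases hω : ω ∈ {ω | |J ω| < δ}
    · rw [Set.indicator_of_mem hω]
      have h1 : |J ω| < δ := hω
      have : (|J ω| + ε)^2 ≤ (|δ| + |ε|)^2 := by
        apply pow_le_pow_left₀ (by positivity)
        have := le_abs_self δ; have := le_abs_self ε
        linarith
      rw [abs_of_nonneg (by positivity)]
      gcongr
    · rw [Set.indicator_of_notMem hω]
      simp only [abs_zero]
      positivity
  -- put together
  have hsplit : ∫ ω, |g (J ω) - 2 * ε * c| ∂P
      ≤ (4 * ε * c) * (P A).toReal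
        + (ε * c / v) * ∫ ω, Set.indicator {ω | |J ω| < δ} (fun ω => (|J ω| + ε)^2) ω ∂P := by
    have hmono : ∫ ω, |g (J ω) - 2 * ε * c| ∂P
        ≤ ∫ ω, (Set.indicator A (fun _ => 4 * ε * c) ω
            + Set.indicator {ω | |J ω| < δ} (fun ω => (ε * c / v) * (|J ω| + ε)^2) ω) ∂P :=
      integral_mono hinth.abs (hint1.add hint2) hptwise
    rw [integral_add hint1 hint2] at hmono
    have he1 : ∫ ω, Set.indicator A (fun _ => 4 * ε * c) ω ∂P = (4 * ε * c) * (P A).toReal := by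
      rw [integral_indicator_const _ hAmeas, smul_eq_mul, mul_comm, measureReal_def]
    have he2 : ∫ ω, Set.indicator {ω | |J ω| < δ} (fun ω => (ε * c / v) * (|J ω| + ε)^2) ω ∂P
        = (ε * c / v) * ∫ ω, Set.indicator {ω | |J ω| < δ} (fun ω => (|J ω| + ε)^2) ω ∂P := by
      rw [← integral_const_mul]
      congr 1
      ext ω
      rw [Set.indicator_mul_right]
    rw [he1, he2] at hmono
    exact hmono
  -- constants
  have hsqrt : Real.sqrt (2 * Real.pi * v) = Real.sqrt (2 * Real.pi) * Real.sqrt v :=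
    Real.sqrt_mul (by positivity) _
  have hsqrtpos : 0 < Real.sqrt (2 * Real.pi * v) := Real.sqrt_pos.2 (by positivity)
  have hc1 : 2 * ε / Real.sqrt (2 * Real.pi * v) = 2 * ε * c := by
    rw [hc, div_eq_mul_inv]
  have hc2 : 4 * ε / Real.sqrt (2 * Real.pi * v) = 4 * ε * c := by
    rw [hc, div_eq_mul_inv]
  have hc3 : ε / (Real.sqrt (2 * Real.pi) * (v : ℝ) ^ ((3 : ℝ) / 2)) = ε * c / v := by
    rw [hc]
    have hrpow : (v : ℝ) ^ ((3 : ℝ) / 2) = (v : ℝ) * Real.sqrt v := by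
      rw [show (3:ℝ)/2 = 1 + 1/2 by norm_num, Real.rpow_add hv', Real.rpow_one,
        ← Real.sqrt_eq_rpow]
    rw [hrpow, hsqrt, div_eq_mul_inv, div_eq_mul_inv, mul_inv, mul_inv, mul_inv]
    ring
  rw [hc1, hc2, hc3]
  exact habs.trans hsplit
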